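/- If M₁ and M₂ are nonnegative matrices and M is the block-diagonal matrix with blocks M₁ and M₂ (and zeros elsewhere), then rank⁺(M) = rank⁺(M₁) + rank⁺(M₂). -/

import Mathlib

/-- The nonnegative rank of a real matrix: the smallest `r` such that `M = A * W`
with `A`, `W` entrywise nonnegative of inner dimension `r`. -/
noncomputable def nrank {m n : Type*} [Fintype m] [Fintype n]
    (M : Matrix m n ℝ) : ℕ :=
  sInf {r : ℕ | ∃ (A : Matrix m (Fin r) ℝ) (W : Matrix (Fin r) n ℝ),
    (∀ i k, 0 ≤ A i k) ∧ (∀ k j, 0 ≤ W k j) ∧ M = A * W}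

lemma nrank_le {m n : Type*} [Fintype m] [Fintype n] (M : Matrix m n ℝ) (r : ℕ)
    (h : ∃ (A : Matrix m (Fin r) ℝ) (W : Matrix (Fin r) n ℝ),
      (∀ i k, 0 ≤ A i k) ∧ (∀ k j, 0 ≤ W k j) ∧ M = A * W) : nrank M ≤ r :=
  Nat.sInf_le h

lemma nrank_spec {m n : Type*} [Fintype m] [Fintype n] [DecidableEq n] (M : Matrix m n ℝ)
    (hM : ∀ i j, 0 ≤ M i j) :
    ∃ (A : Matrix m (Fin (nrank M)) ℝ) (W : Matrix (Fin (nrank M)) n ℝ),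
      (∀ i k, 0 ≤ A i k) ∧ (∀ k j, 0 ≤ W k j) ∧ M = A * W := by
  have hne : (Fintype.card n) ∈ {r : ℕ | ∃ (A : Matrix m (Fin r) ℝ) (W : Matrix (Fin r) n ℝ),
      (∀ i k, 0 ≤ A i k) ∧ (∀ k j, 0 ≤ W k j) ∧ M = A * W} := by
    refine ⟨fun i k => M i ((Fintype.equivFin n).symm k),
      fun k j => if (Fintype.equivFin n).symm k = j then 1 else 0,
      fun i k => hM _ _, fun k j => by positivity, ?_⟩
    ext i j
    erw [Matrix.mul_apply]
    rw [← Equiv.sum_comp (Fintype.equivFin n) (fun k =>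
      M i ((Fintype.equivFin n).symm k) * if (Fintype.equivFin n).symm k = j then 1 else 0)]
    simp [Finset.sum_ite_eq', mul_ite]
  exact Nat.sInf_mem ⟨_, hne⟩

/-- Lower bound: any nonnegative factorization of a block diagonal matrix splits. -/
lemma nrank_split {m₁ n₁ m₂ n₂ : ℕ}
    (M₁ : Matrix (Fin m₁) (Fin n₁) ℝ) (M₂ : Matrix (Fin m₂) (Fin n₂) ℝ)
    (r : ℕ) (A : Matrix (Fin m₁ ⊕ Fin m₂) (Fin r) ℝ)
    (W : Matrix (Fin r) (Fin n₁ ⊕ Fin n₂) ℝ)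
    (hA : ∀ i k, 0 ≤ A i k) (hW : ∀ k j, 0 ≤ W k j)
    (hfac : Matrix.fromBlocks M₁ 0 0 M₂ = A * W) :
    nrank M₁ + nrank M₂ ≤ r := by
  classical
  set S : Finset (Fin r) := Finset.univ.filter (fun k => ∃ i, A (Sum.inl i) k ≠ 0) with hS
  have hprod : ∀ (i : Fin m₁) (j : Fin n₂) (k : Fin r),
      A (Sum.inl i) k * W k (Sum.inr j) = 0 := by
    intro i j k
    have h0 : ∑ k, A (Sum.inl i) k * W k (Sum.inr j) = 0 := by
      have := congrFun (congrFun hfac (Sum.inl i)) (Sum.inr j)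
      simp only [Matrix.fromBlocks_apply₁₂, Matrix.zero_apply, Matrix.mul_apply] at this
      exact this.symm
    exact (Finset.sum_eq_zero_iff_of_nonneg (fun k _ =>
      mul_nonneg (hA _ _) (hW _ _))).mp h0 k (Finset.mem_univ k)
  have hWzero : ∀ k ∈ S, ∀ j : Fin n₂, W k (Sum.inr j) = 0 := by
    intro k hk j
    rw [hS, Finset.mem_filter] at hk
    obtain ⟨i, hi⟩ := hk.2
    rcases mul_eq_zero.mp (hprod i j k) with h | h
    · exact absurd h hi
    · exact h
  have hAzero : ∀ k ∉ S, ∀ i : Fin m₁, A (Sum.inl i) k = 0 := by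
    intro k hk i
    rw [hS, Finset.mem_filter] at hk
    push_neg at hk
    exact hk (Finset.mem_univ k) i
  have h1 : nrank M₁ ≤ S.card := by
    apply nrank_le
    refine ⟨fun i k => A (Sum.inl i) (S.equivFin.symm k),
      fun k j => W (S.equivFin.symm k) (Sum.inl j),
      fun i k => hA _ _, fun k j => hW _ _, ?_⟩
    ext i j
    erw [Matrix.mul_apply]
    rw [Equiv.sum_comp S.equivFin.symm
      (fun x : S => A (Sum.inl i) x * W x (Sum.inl j))]
    rw [Finset.sum_coe_sort S (fun x => A (Sum.inl i) x * W x (Sum.inl j))]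
    have hij := congrFun (congrFun hfac (Sum.inl i)) (Sum.inl j)
    simp only [Matrix.fromBlocks_apply₁₁, Matrix.mul_apply] at hij
    rw [hij]
    symm
    apply Finset.sum_subset (Finset.subset_univ S)
    intro k _ hk
    rw [hAzero k hk i, zero_mul]
  have h2 : nrank M₂ ≤ Sᶜ.card := by
    apply nrank_le
    refine ⟨fun i k => A (Sum.inr i) (Sᶜ.equivFin.symm k),
      fun k j => W (Sᶜ.equivFin.symm k) (Sum.inr j),
      fun i k => hA _ _, fun k j => hW _ _, ?_⟩
    ext i j
    erw [Matrix.mul_apply]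
    rw [Equiv.sum_comp Sᶜ.equivFin.symm
      (fun x : ↥Sᶜ => A (Sum.inr i) x * W x (Sum.inr j))]
    rw [Finset.sum_coe_sort Sᶜ (fun x => A (Sum.inr i) x * W x (Sum.inr j))]
    have hij := congrFun (congrFun hfac (Sum.inr i)) (Sum.inr j)
    simp only [Matrix.fromBlocks_apply₂₂, Matrix.mul_apply] at hij
    rw [hij]
    symm
    apply Finset.sum_subset (Finset.subset_univ Sᶜ)
    intro k _ hk
    rw [Finset.mem_compl, not_not] at hk
    rw [hWzero k hk j, mul_zero]
  calc nrank M₁ + nrank M₂ ≤ S.card + Sᶜ.card := add_le_add h1 h2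
    _ = r := by rw [Finset.card_add_card_compl]; simp

theorem stmt_4 {m₁ n₁ m₂ n₂ : ℕ}
    (M₁ : Matrix (Fin m₁) (Fin n₁) ℝ) (M₂ : Matrix (Fin m₂) (Fin n₂) ℝ)
    (hM₁ : ∀ i j, 0 ≤ M₁ i j) (hM₂ : ∀ i j, 0 ≤ M₂ i j) :
    nrank (Matrix.fromBlocks M₁ 0 0 M₂) = nrank M₁ + nrank M₂ := by
  have hMnn : ∀ i j, 0 ≤ Matrix.fromBlocks M₁ 0 0 M₂ i j := by
    rintro (i | i) (j | j) <;> simp [hM₁, hM₂]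
  apply le_antisymm
  · obtain ⟨A₁, W₁, hA₁, hW₁, hfac₁⟩ := nrank_spec M₁ hM₁
    obtain ⟨A₂, W₂, hA₂, hW₂, hfac₂⟩ := nrank_spec M₂ hM₂
    apply nrank_le
    refine ⟨fun i k => Matrix.fromBlocks A₁ 0 0 A₂ i (finSumFinEquiv.symm k),
      fun k j => Matrix.fromBlocks W₁ 0 0 W₂ (finSumFinEquiv.symm k) j, ?_, ?_, ?_⟩
    · have : ∀ i' k', 0 ≤ Matrix.fromBlocks A₁ 0 0 A₂ i' k' := by
        rintro (i | i) (k' | k') <;> simp [hA₁, hA₂]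
      exact fun i k => this i _
    · have : ∀ k' j', 0 ≤ Matrix.fromBlocks W₁ 0 0 W₂ k' j' := by
        rintro (k' | k') (j | j) <;> simp [hW₁, hW₂]
      exact fun k j => this _ j
    · ext i j
      erw [Matrix.mul_apply]
      rw [← Equiv.sum_comp finSumFinEquiv.symm.symm
        (fun k' => Matrix.fromBlocks A₁ 0 0 A₂ i (finSumFinEquiv.symm k') *
          Matrix.fromBlocks W₁ 0 0 W₂ (finSumFinEquiv.symm k') j)]
      simp only [Equiv.symm_symm, Equiv.symm_apply_apply]
      have hbm : Matrix.fromBlocks M₁ 0 0 M₂ =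
          Matrix.fromBlocks A₁ 0 0 A₂ * Matrix.fromBlocks W₁ 0 0 W₂ := by
        rw [Matrix.fromBlocks_multiply]
        simp [hfac₁, hfac₂]
      rw [hbm]
      simp [Matrix.mul_apply]
  · obtain ⟨A, W, hA, hW, hfac⟩ := nrank_spec (Matrix.fromBlocks M₁ 0 0 M₂) hMnn
    exact nrank_split M₁ M₂ _ A W hA hW hfac
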